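/- Let p ≥ 5 be a prime and n ≥ 1 an integer with p not dividing n+1. If x is a trace-zero (n+1)×(n+1) matrix over ℚ_p such that, for every trace-zero (n+1)×(n+1) matrix y with all entries in ℤ_p, the matrix ⁅x,y⁆ = xy − yx has all entries in ℤ_p, then all entries of x lie in ℤ_p. (That is, the normalizer of sl_{n+1}(ℤ_p) inside sl_{n+1}(ℚ_p) equals sl_{n+1}(ℤ_p).) -/

import Mathlib

lemma int_iff_norm_le {p : ℕ} [Fact p.Prime] (v : ℚ_[p]) :
    (∃ a : ℤ_[p], v = (a : ℚ_[p])) ↔ ‖v‖ ≤ 1 := by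
  constructor
  · rintro ⟨a, rfl⟩; exact a.2
  · intro h; exact ⟨⟨v, h⟩, rfl⟩

/-- for `p ≥ 5` prime with `p ∤ n+1`, the normalizer of
`sl_{n+1}(ℤ_p)` inside `sl_{n+1}(ℚ_p)` equals `sl_{n+1}(ℤ_p)`: if `x` is a
trace-zero matrix over `ℚ_p` such that `xy − yx` has `ℤ_p`-entries for every
trace-zero matrix `y` with `ℤ_p`-entries, then `x` has `ℤ_p`-entries. -/
theorem stmt13 (p n : ℕ) [Fact p.Prime] (hp5 : 5 ≤ p) (hn : 1 ≤ n)
    (hpn : ¬ p ∣ (n + 1))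
    (x : Matrix (Fin (n + 1)) (Fin (n + 1)) ℚ_[p])
    (hx : Matrix.trace x = 0)
    (hnorm : ∀ y : Matrix (Fin (n + 1)) (Fin (n + 1)) ℚ_[p],
      Matrix.trace y = 0 → (∀ i j, ∃ a : ℤ_[p], y i j = (a : ℚ_[p])) →
        ∀ i j, ∃ a : ℤ_[p], (x * y - y * x) i j = (a : ℚ_[p])) :
    ∀ i j, ∃ a : ℤ_[p], x i j = (a : ℚ_[p]) := by
  -- the commutator with a trace-zero integral matrix is integral, in norm form
  have key : ∀ (k l : Fin (n+1)), k ≠ l → ∀ i j,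
      ‖(x * Matrix.single k l (1:ℚ_[p])
        - Matrix.single k l (1:ℚ_[p]) * x) i j‖ ≤ 1 := by
    intro k l hkl i j
    rw [← int_iff_norm_le]
    refine hnorm _ (Matrix.trace_single_eq_of_ne k l 1 hkl) ?_ i j
    intro i j
    rw [int_iff_norm_le]
    by_cases h : k = i ∧ l = j
    · rw [Matrix.single, Matrix.of_apply, if_pos h]; simp
    · rw [Matrix.single, Matrix.of_apply, if_neg h]; simp
  -- off-diagonal entries are integral
  have hoff : ∀ i k : Fin (n+1), i ≠ k → ‖x i k‖ ≤ 1 := by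
    intro i k hik
    have := key k i (Ne.symm hik) i i
    rwa [Matrix.sub_apply, Matrix.mul_single_apply_same,
      Matrix.single_mul_apply_of_ne 1 k i i i hik, mul_one, sub_zero] at this
  -- differences of diagonal entries are integral
  have hdiff : ∀ k l : Fin (n+1), ‖x k k - x l l‖ ≤ 1 := by
    intro k l
    by_cases hkl : k = l
    · subst hkl; simp
    · have := key k l hkl k l
      rwa [Matrix.sub_apply, Matrix.mul_single_apply_same,
        Matrix.single_mul_apply_same, mul_one, one_mul] at this
  -- diagonal entries are integral
  have hdiag : ∀ j : Fin (n+1), ‖x j j‖ ≤ 1 := by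
    intro j
    set a : Fin (n+1) → ℤ_[p] := fun i => ⟨x j j - x i i, hdiff j i⟩ with ha
    have hsum : ((∑ i, a i : ℤ_[p]) : ℚ_[p]) = (n+1 : ℚ_[p]) * x j j := by
      rw [show ((∑ i, a i : ℤ_[p]) : ℚ_[p]) = ∑ i, ((a i : ℤ_[p]) : ℚ_[p]) from
        map_sum (PadicInt.Coe.ringHom) _ _]
      simp only [ha]
      rw [Finset.sum_sub_distrib, Finset.sum_const]
      have : ∑ i, x i i = 0 := hx
      simp [this, Finset.card_univ, mul_comm]
    have hnml : ‖(n+1 : ℚ_[p]) * x j j‖ ≤ 1 := by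
      rw [← hsum]; exact (∑ i, a i).2
    have hunit : ‖(n+1 : ℚ_[p])‖ = 1 := by
      have h1 : ‖((n+1 : ℤ) : ℚ_[p])‖ ≤ 1 := Padic.norm_int_le_one _
      have h2 : ¬ ‖((n+1 : ℤ) : ℚ_[p])‖ < 1 := by
        rw [Padic.norm_intCast_lt_one_iff]
        exact_mod_cast hpn
      push_cast at h1 h2 ⊢
      linarith
    rwa [norm_mul, hunit, one_mul] at hnml
  intro i j
  rw [int_iff_norm_le]
  by_cases h : i = j
  · subst h; exact hdiag i
  · exact hoff i j h
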